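/- For every integer n ≥ 2, the total number of odd parts over all partitions with perimeter n equals (n+2)·2^{n−3}, and the total number of even parts over all partitions with perimeter n equals n·2^{n−3}. -/

import Mathlib

/-- A partition: a nonempty weakly decreasing list of positive integers. -/
def IsPartition (l : List ℕ) : Prop :=
  l ≠ [] ∧ l.Pairwise (· ≥ ·) ∧ ∀ x ∈ l, 0 < x

/-- The perimeter of a partition: largest part plus number of parts minus 1. -/
def perim (l : List ℕ) : ℕ := l.headI + l.length - 1

/-- Number of repeated parts: indices i with λ_i = λ_{i+1}. -/
def repStat (l : List ℕ) : ℕ :=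
  ((List.range (l.length - 1)).filter fun i => l.getD i 0 = l.getD (i + 1) 0).length

/-- Number of even parts. -/
def evenStat (l : List ℕ) : ℕ := l.countP fun x => x % 2 = 0

namespace TOE

def S (n : ℕ) : Set (List ℕ) := {l | IsPartition l ∧ perim l = n}

def dup (l : List ℕ) : List ℕ := l.headI :: l
def inc (l : List ℕ) : List ℕ := (l.headI + 1) :: l.tail

lemma S_one : S 1 = {[1]} := by
  ext l
  constructor
  · rintro ⟨⟨hne, hs, hp⟩, hper⟩
    match l with
    | [] => exact absurd rfl hne
    | a :: t =>
      have ha : 0 < a := hp a (by simp)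
      simp only [perim, List.headI_cons, List.length_cons] at hper
      have ht : t = [] := List.eq_nil_of_length_eq_zero (by omega)
      subst ht
      have : a = 1 := by omega
      simp [this]
  · rintro rfl
    refine ⟨⟨by simp, by simp, by simp⟩, rfl⟩

lemma dup_mem {n : ℕ} {l : List ℕ} (hl : l ∈ S n) : dup l ∈ S (n + 1) := by
  obtain ⟨⟨hne, hs, hp⟩, hper⟩ := hl
  match l with
  | [] => exact absurd rfl hne
  | a :: t =>
    rw [List.pairwise_cons] at hs
    refine ⟨⟨by simp [dup], ?_, ?_⟩, ?_⟩
    · rw [dup, List.headI_cons, List.pairwise_cons, List.pairwise_cons]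
      refine ⟨fun b hb => ?_, hs⟩
      rcases List.mem_cons.1 hb with rfl | hb
      · exact le_refl _
      · exact hs.1 b hb
    · intro x hx
      rcases List.mem_cons.1 hx with rfl | hx
      · exact hp _ (by simp)
      · exact hp x hx
    · simp only [perim, dup, List.headI_cons, List.length_cons] at hper ⊢
      omega

lemma inc_mem {n : ℕ} {l : List ℕ} (hl : l ∈ S n) : inc l ∈ S (n + 1) := by
  obtain ⟨⟨hne, hs, hp⟩, hper⟩ := hl
  match l with
  | [] => exact absurd rfl hne
  | a :: t =>
    rw [List.pairwise_cons] at hs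
    refine ⟨⟨by simp [inc], ?_, ?_⟩, ?_⟩
    · rw [inc, List.headI_cons, List.tail_cons, List.pairwise_cons]
      exact ⟨fun b hb => by have := hs.1 b hb; omega, hs.2⟩
    · intro x hx
      rcases List.mem_cons.1 hx with rfl | hx
      · omega
      · exact hp x (List.mem_cons_of_mem _ hx)
    · simp only [perim, inc, List.headI_cons, List.tail_cons, List.length_cons] at hper ⊢
      omega

lemma step (n : ℕ) (hn : 1 ≤ n) : S (n + 1) = dup '' S n ∪ inc '' S n := by
  ext m
  constructor
  · rintro ⟨⟨hne, hs, hp⟩, hper⟩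
    match m with
    | [] => exact absurd rfl hne
    | a :: t =>
      rw [List.pairwise_cons] at hs
      simp only [perim, List.headI_cons, List.length_cons] at hper
      have ha : 0 < a := hp a (by simp)
      match t with
      | [] =>
        right
        simp only [List.length_nil] at hper
        have han : a = n + 1 := by omega
        refine ⟨[a - 1], ⟨⟨by simp, by simp, by intro x hx; simp at hx; omega⟩, ?_⟩, ?_⟩
        · simp only [perim, List.headI_cons, List.length_cons, List.length_nil]; omega
        · simp only [inc, List.headI_cons, List.tail_cons]
          congr 1
          omega
      | b :: s =>
        have hb : 0 < b := hp b (by simp)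
        have hab : b ≤ a := hs.1 b (by simp)
        by_cases heq : a = b
        · left
          subst heq
          refine ⟨a :: s, ⟨⟨by simp, hs.2, fun x hx => hp x (List.mem_cons_of_mem _ hx)⟩, ?_⟩,
            rfl⟩
          simp only [perim, List.headI_cons, List.length_cons] at hper ⊢
          omega
        · right
          rw [List.pairwise_cons] at hs
          refine ⟨(a - 1) :: b :: s, ⟨⟨by simp, ?_, ?_⟩, ?_⟩, ?_⟩
          · rw [List.pairwise_cons, List.pairwise_cons]
            refine ⟨fun c hc => ?_, hs.2⟩
            rcases List.mem_cons.1 hc with rfl | hc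
            · omega
            · have := hs.2.1 c hc; omega
          · intro x hx
            rcases List.mem_cons.1 hx with rfl | hx
            · omega
            · exact hp x (List.mem_cons_of_mem _ hx)
          · simp only [perim, List.headI_cons, List.length_cons] at hper ⊢
            omega
          · simp only [inc, List.headI_cons, List.tail_cons]
            congr 1
            omega
  · rintro (⟨l, hl, rfl⟩ | ⟨l, hl, rfl⟩)
    · exact dup_mem hl
    · exact inc_mem hl

lemma finite_S (n : ℕ) : (S n).Finite := by
  induction n with
  | zero =>
    have : S 0 = ∅ := by
      ext l
      simp only [Set.mem_empty_iff_false, iff_false]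
      rintro ⟨⟨hne, hs, hp⟩, hper⟩
      match l with
      | [] => exact hne rfl
      | a :: t =>
        have := hp a (by simp)
        simp only [perim, List.headI_cons, List.length_cons] at hper
        omega
    rw [this]; exact Set.finite_empty
  | succ n ih =>
    rcases Nat.eq_zero_or_pos n with rfl | hn
    · rw [S_one]; exact Set.finite_singleton _
    · rw [step n hn]; exact (ih.image _).union (ih.image _)

lemma dup_injOn (n : ℕ) : Set.InjOn dup (S n) := by
  intro l _ m _ h
  simpa [dup] using congrArg List.tail h

lemma inc_injOn (n : ℕ) : Set.InjOn inc (S n) := by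
  rintro l hl m hm h
  obtain ⟨a, t, rfl⟩ : ∃ a t, l = a :: t := by
    match l with
    | [] => exact absurd rfl hl.1.1
    | a :: t => exact ⟨a, t, rfl⟩
  obtain ⟨b, u, rfl⟩ : ∃ b u, m = b :: u := by
    match m with
    | [] => exact absurd rfl hm.1.1
    | b :: u => exact ⟨b, u, rfl⟩
  simp only [inc, List.headI_cons, List.tail_cons, List.cons.injEq] at h
  obtain ⟨h1, h2⟩ := h
  rw [h2]
  congr 1
  omega

lemma disj (n : ℕ) : Disjoint (dup '' S n) (inc '' S n) := by
  rw [Set.disjoint_left]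
  rintro x ⟨l, hl, rfl⟩ ⟨m, hm, heq⟩
  obtain ⟨a, t, rfl⟩ : ∃ a t, l = a :: t := by
    match l with
    | [] => exact absurd rfl hl.1.1
    | a :: t => exact ⟨a, t, rfl⟩
  obtain ⟨b, u, rfl⟩ : ∃ b u, m = b :: u := by
    match m with
    | [] => exact absurd rfl hm.1.1
    | b :: u => exact ⟨b, u, rfl⟩
  simp only [inc, dup, List.headI_cons, List.tail_cons] at heq
  match u with
  | [] =>
    simp only [List.cons.injEq] at heq
    exact absurd heq.2.symm (List.cons_ne_nil _ _)
  | c :: v =>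
    simp only [List.cons.injEq] at heq
    have hsorted := hm.1.2.1
    rw [List.pairwise_cons] at hsorted
    have hcb : c ≤ b := hsorted.1 c (by simp)
    omega

lemma sum_step (F : List ℕ → ℚ) (n : ℕ) (hn : 1 ≤ n) :
    (∑ᶠ l ∈ S (n + 1), F l) =
      (∑ᶠ l ∈ S n, F (dup l)) + ∑ᶠ l ∈ S n, F (inc l) := by
  rw [step n hn, finsum_mem_union (disj n) ((finite_S n).image _) ((finite_S n).image _),
    finsum_mem_image (dup_injOn n), finsum_mem_image (inc_injOn n)]

/-! Statistics -/

def oq (l : List ℕ) : ℚ := (l.countP fun x => x % 2 = 1 : ℕ)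
def eq' (l : List ℕ) : ℚ := (l.countP fun x => x % 2 = 0 : ℕ)
def ohq (l : List ℕ) : ℚ := if l.headI % 2 = 1 then 1 else 0
def ehq (l : List ℕ) : ℚ := if l.headI % 2 = 0 then 1 else 0

noncomputable def fS (n : ℕ) : ℚ := ∑ᶠ l ∈ S n, oq l
noncomputable def gS (n : ℕ) : ℚ := ∑ᶠ l ∈ S n, eq' l
noncomputable def ohS (n : ℕ) : ℚ := ∑ᶠ l ∈ S n, ohq l
noncomputable def ehS (n : ℕ) : ℚ := ∑ᶠ l ∈ S n, ehq l
noncomputable def cS (n : ℕ) : ℚ := ∑ᶠ l ∈ S n, (1 : ℚ)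

lemma headI_dup (l : List ℕ) : (dup l).headI = l.headI := rfl

lemma oq_dup (l : List ℕ) : oq (dup l) = oq l + ohq l := by
  simp only [oq, dup, ohq, List.countP_cons]
  rcases Nat.mod_two_eq_zero_or_one l.headI with h | h <;> simp [h]

lemma eq'_dup (l : List ℕ) : eq' (dup l) = eq' l + ehq l := by
  simp only [eq', dup, ehq, List.countP_cons]
  rcases Nat.mod_two_eq_zero_or_one l.headI with h | h <;> simp [h]

lemma ohq_dup (l : List ℕ) : ohq (dup l) = ohq l := rfl
lemma ehq_dup (l : List ℕ) : ehq (dup l) = ehq l := rfl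

lemma ohq_inc (l : List ℕ) : ohq (inc l) = ehq l := by
  simp only [ohq, inc, ehq, List.headI_cons]
  rcases Nat.mod_two_eq_zero_or_one l.headI with h | h
  · simp [(by omega : (l.headI + 1) % 2 = 1), h]
  · simp [(by omega : (l.headI + 1) % 2 = 0), h]

lemma ehq_inc (l : List ℕ) : ehq (inc l) = ohq l := by
  simp only [ohq, inc, ehq, List.headI_cons]
  rcases Nat.mod_two_eq_zero_or_one l.headI with h | h
  · simp [(by omega : (l.headI + 1) % 2 = 1), h]
  · simp [(by omega : (l.headI + 1) % 2 = 0), h]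

lemma oq_inc (l : List ℕ) : oq (inc l) + ohq l = oq l + ehq l := by
  match l with
  | [] => simp [oq, inc, ohq, ehq]
  | a :: t =>
    simp only [oq, inc, ohq, ehq, List.headI_cons, List.tail_cons, List.countP_cons]
    rcases Nat.mod_two_eq_zero_or_one a with h | h
    · have h1 : (a + 1) % 2 = 1 := by omega
      simp [h, h1]
      try push_cast
      try ring
    · have h1 : (a + 1) % 2 = 0 := by omega
      simp [h, h1]
      try push_cast
      try ring

lemma eq'_inc (l : List ℕ) (hl : l ≠ []) : eq' (inc l) + ehq l = eq' l + ohq l := by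
  match l with
  | [] => exact absurd rfl hl
  | a :: t =>
    simp only [eq', inc, ohq, ehq, List.headI_cons, List.tail_cons, List.countP_cons]
    rcases Nat.mod_two_eq_zero_or_one a with h | h
    · have h1 : (a + 1) % 2 = 1 := by omega
      simp [h, h1]
      try push_cast
      try ring
    · have h1 : (a + 1) % 2 = 0 := by omega
      simp [h, h1]
      try push_cast
      try ring

/-! Recurrences -/

lemma cS_succ {n : ℕ} (hn : 1 ≤ n) : cS (n + 1) = 2 * cS n := by
  rw [cS, sum_step _ n hn]
  rw [cS]; ring

lemma ohS_succ {n : ℕ} (hn : 1 ≤ n) : ohS (n + 1) = ohS n + ehS n := by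
  have h1 : (∑ᶠ l ∈ S n, ohq (dup l)) = ohS n :=
    finsum_mem_congr rfl fun l _ => ohq_dup l
  have h2 : (∑ᶠ l ∈ S n, ohq (inc l)) = ehS n :=
    finsum_mem_congr rfl fun l _ => ohq_inc l
  rw [ohS, sum_step _ n hn, h1, h2]

lemma ehS_succ {n : ℕ} (hn : 1 ≤ n) : ehS (n + 1) = ehS n + ohS n := by
  have h1 : (∑ᶠ l ∈ S n, ehq (dup l)) = ehS n :=
    finsum_mem_congr rfl fun l _ => ehq_dup l
  have h2 : (∑ᶠ l ∈ S n, ehq (inc l)) = ohS n :=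
    finsum_mem_congr rfl fun l _ => ehq_inc l
  rw [ehS, sum_step _ n hn, h1, h2]

lemma ohS_add_ehS (n : ℕ) : ohS n + ehS n = cS n := by
  rw [ohS, ehS, cS, ← finsum_mem_add_distrib (finite_S n)]
  refine finsum_mem_congr rfl fun l _ => ?_
  simp only [ohq, ehq]
  rcases Nat.mod_two_eq_zero_or_one l.headI with h | h <;> simp [h]

lemma fS_succ {n : ℕ} (hn : 1 ≤ n) : fS (n + 1) = 2 * fS n + ehS n := by
  rw [fS, sum_step _ n hn]
  have h1 : (∑ᶠ l ∈ S n, oq (dup l)) = fS n + ohS n := by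
    rw [fS, ohS, ← finsum_mem_add_distrib (finite_S n)]
    exact finsum_mem_congr rfl fun l _ => oq_dup l
  have h2 : (∑ᶠ l ∈ S n, oq (inc l)) + ohS n = fS n + ehS n := by
    rw [fS, ohS, ehS, ← finsum_mem_add_distrib (finite_S n),
      ← finsum_mem_add_distrib (finite_S n)]
    exact finsum_mem_congr rfl fun l _ => oq_inc l
  linarith

lemma gS_succ {n : ℕ} (hn : 1 ≤ n) : gS (n + 1) = 2 * gS n + ohS n := by
  rw [gS, sum_step _ n hn]
  have h1 : (∑ᶠ l ∈ S n, eq' (dup l)) = gS n + ehS n := by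
    rw [gS, ehS, ← finsum_mem_add_distrib (finite_S n)]
    exact finsum_mem_congr rfl fun l _ => eq'_dup l
  have h2 : (∑ᶠ l ∈ S n, eq' (inc l)) + ehS n = gS n + ohS n := by
    rw [gS, ehS, ohS, ← finsum_mem_add_distrib (finite_S n),
      ← finsum_mem_add_distrib (finite_S n)]
    exact finsum_mem_congr rfl fun l hl => eq'_inc l hl.1.1
  linarith

/-! Base values -/

lemma cS_one : cS 1 = 1 := by rw [cS, S_one, finsum_mem_singleton]
lemma ohS_one : ohS 1 = 1 := by rw [ohS, S_one, finsum_mem_singleton]; simp [ohq]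
lemma ehS_one : ehS 1 = 0 := by rw [ehS, S_one, finsum_mem_singleton]; simp [ehq]
lemma fS_one : fS 1 = 1 := by rw [fS, S_one, finsum_mem_singleton]; simp [oq]
lemma gS_one : gS 1 = 0 := by rw [gS, S_one, finsum_mem_singleton]; simp [eq']

/-! Closed forms -/

lemma cS_eq : ∀ n : ℕ, 1 ≤ n → cS n = 2 ^ n / 2 := by
  intro n hn
  induction n, hn using Nat.le_induction with
  | base => rw [cS_one]; norm_num
  | succ n hn ih =>
    rw [cS_succ hn, ih, pow_succ]
    ring

lemma ehS_eq : ∀ n : ℕ, 2 ≤ n → ehS n = 2 ^ n / 4 := by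
  intro n hn
  obtain ⟨m, rfl⟩ : ∃ m, n = m + 1 := ⟨n - 1, by omega⟩
  have hm : 1 ≤ m := by omega
  rw [ehS_succ hm, add_comm, ohS_add_ehS, cS_eq m hm, pow_succ]
  ring

lemma ohS_eq : ∀ n : ℕ, 2 ≤ n → ohS n = 2 ^ n / 4 := by
  intro n hn
  obtain ⟨m, rfl⟩ : ∃ m, n = m + 1 := ⟨n - 1, by omega⟩
  have hm : 1 ≤ m := by omega
  rw [ohS_succ hm, ohS_add_ehS, cS_eq m hm, pow_succ]
  ring

lemma fS_eq : ∀ n : ℕ, 2 ≤ n → fS n = (n + 2) * 2 ^ n / 8 := by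
  intro n hn
  induction n, hn using Nat.le_induction with
  | base =>
    rw [show (2 : ℕ) = 1 + 1 from rfl, fS_succ le_rfl, fS_one, ehS_one]
    norm_num
  | succ n hn ih =>
    rw [fS_succ (by omega), ih, ehS_eq n hn, pow_succ]
    push_cast
    ring

lemma gS_eq : ∀ n : ℕ, 2 ≤ n → gS n = n * 2 ^ n / 8 := by
  intro n hn
  induction n, hn using Nat.le_induction with
  | base =>
    rw [show (2 : ℕ) = 1 + 1 from rfl, gS_succ le_rfl, gS_one, ohS_one]
    norm_num
  | succ n hn ih =>
    rw [gS_succ (by omega), ih, ohS_eq n hn, pow_succ]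
    push_cast
    ring

end TOE

theorem total_odd_even_parts (n : ℕ) (hn : 2 ≤ n) :
    (∑ᶠ l ∈ {l : List ℕ | IsPartition l ∧ perim l = n},
        ((l.countP fun x => x % 2 = 1 : ℕ) : ℚ)) = (n + 2) * 2 ^ ((n : ℤ) - 3) ∧
    (∑ᶠ l ∈ {l : List ℕ | IsPartition l ∧ perim l = n},
        ((evenStat l : ℕ) : ℚ)) = n * 2 ^ ((n : ℤ) - 3) := by
  have hz : (2 : ℚ) ^ ((n : ℤ) - 3) = 2 ^ n / 8 := by
    rw [zpow_sub₀ (by norm_num : (2 : ℚ) ≠ 0), zpow_natCast]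
    norm_num
  constructor
  · have : (∑ᶠ l ∈ {l : List ℕ | IsPartition l ∧ perim l = n},
        ((l.countP fun x => x % 2 = 1 : ℕ) : ℚ)) = TOE.fS n := rfl
    rw [this, TOE.fS_eq n hn, hz]
    ring
  · have : (∑ᶠ l ∈ {l : List ℕ | IsPartition l ∧ perim l = n},
        ((evenStat l : ℕ) : ℚ)) = TOE.gS n := rfl
    rw [this, TOE.gS_eq n hn, hz]
    ring
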